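/- Fix a lattice Ω ⊂ ℂ and a point z ∈ ℂ with z ∉ Ω. Then the family (1/(z−ω) + 1/ω + z/ω²), indexed by ω ∈ Ω∖{0}, is absolutely summable; consequently the Weierstrass ζ-function ζ(Ω,z) := 1/z + ∑_{ω ∈ Ω∖{0}} (1/(z−ω) + 1/ω + z/ω²) is well defined for all z ∉ Ω. -/

import Mathlib

/-- The lattice `ℤω₁ + ℤω₂` generated by two complex numbers. -/
def lattice (ω₁ ω₂ : ℂ) : Set ℂ := {w : ℂ | ∃ m n : ℤ, w = (m : ℂ) * ω₁ + (n : ℂ) * ω₂}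

/-- The Weierstrass ζ-function attached to a set `Ω ⊂ ℂ`. -/
noncomputable def wzeta (Ω : Set ℂ) (z : ℂ) : ℂ :=
  1 / z + ∑' ω : {w : ℂ // w ∈ Ω ∧ w ≠ 0},
    (1 / (z - (ω : ℂ)) + 1 / (ω : ℂ) + z / (ω : ℂ) ^ 2)

/-- for a lattice `Ω` and `z ∉ Ω`, the family
`(1/(z−ω) + 1/ω + z/ω²)_{ω ∈ Ω∖{0}}` is absolutely summable, so that the Weierstrass
ζ-function `ζ(Ω,z) = 1/z + ∑_{ω ∈ Ω∖{0}} (1/(z−ω) + 1/ω + z/ω²)` is well defined. -/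
theorem weierstrass_zeta_summable (ω₁ ω₂ : ℂ) (hindep : LinearIndependent ℝ ![ω₁, ω₂])
    (z : ℂ) (hz : z ∉ lattice ω₁ ω₂) :
    Summable (fun ω : {w : ℂ // w ∈ lattice ω₁ ω₂ ∧ w ≠ 0} =>
      ‖1 / (z - (ω : ℂ)) + 1 / (ω : ℂ) + z / (ω : ℂ) ^ 2‖) := by
  classical
  have hcard : Fintype.card (Fin 2) = Module.finrank ℝ ℂ := by
    simp [Complex.finrank_real_complex]
  set B : Module.Basis (Fin 2) ℝ ℂ := basisOfLinearIndependentOfCardEqFinrank hindep hcard with hBdef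
  have hB : ∀ i, B i = ![ω₁, ω₂] i := fun i => by
    rw [hBdef, coe_basisOfLinearIndependentOfCardEqFinrank]
  set φ : (Fin 2 → ℤ) → ℂ := fun x => (x 0 : ℂ) * ω₁ + (x 1 : ℂ) * ω₂ with hφdef
  have hφB : ∀ x : Fin 2 → ℤ, φ x = B.equivFun.symm (fun i => ((x i : ℝ))) := by
    intro x
    rw [Module.Basis.equivFun_symm_apply, Fin.sum_univ_two, hB 0, hB 1]
    simp [hφdef, Complex.real_smul]
  -- antilipschitz bound
  obtain ⟨K, hK⟩ : ∃ K : NNReal, AntilipschitzWith K (B.equivFunL.symm : (Fin 2 → ℝ) → ℂ) :=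
    ⟨_, B.equivFunL.symm.antilipschitz⟩
  set c : ℝ := ((K : ℝ) + 1)⁻¹ with hcdef
  have hc0 : 0 < c := by positivity
  have hnormcast : ∀ x : Fin 2 → ℤ, ‖(fun i => ((x i : ℝ)))‖ = ‖x‖ := by
    intro x; simp only [Pi.norm_def]; congr 1
  have hlb : ∀ x : Fin 2 → ℤ, c * ‖x‖ ≤ ‖φ x‖ := by
    intro x
    have h1 : ‖(fun i => ((x i : ℝ)))‖ ≤ (K : ℝ) * ‖φ x‖ := by
      have h := hK.le_mul_dist (fun i => ((x i : ℝ))) 0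
      simp only [map_zero, dist_zero_right] at h
      have heq : (B.equivFunL.symm : (Fin 2 → ℝ) → ℂ) (fun i => ((x i : ℝ))) = φ x := by
        rw [hφB x]; rfl
      rwa [heq] at h
    have h2 : ‖x‖ ≤ ((K : ℝ) + 1) * ‖φ x‖ := by
      rw [← hnormcast x]
      nlinarith [norm_nonneg (φ x)]
    rw [hcdef, inv_mul_le_iff₀ (by positivity)]
    linarith
  have hφinj : Function.Injective φ := by
    intro x y hxy
    have hsub : φ (x - y) = 0 := by
      simp only [hφdef, Pi.sub_apply] at hxy ⊢
      push_cast
      linear_combination hxy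
    have := hlb (x - y)
    rw [hsub, norm_zero] at this
    have : ‖x - y‖ ≤ 0 := by nlinarith
    have := le_antisymm this (norm_nonneg _)
    rwa [norm_eq_zero, sub_eq_zero] at this
  -- build the equivalence
  have hmem : ∀ x : {x : Fin 2 → ℤ // x ≠ 0}, φ x.1 ∈ lattice ω₁ ω₂ ∧ φ x.1 ≠ 0 := by
    rintro ⟨x, hx⟩
    refine ⟨⟨x 0, x 1, rfl⟩, fun h => hx ?_⟩
    have : φ x = φ 0 := by simpa [hφdef] using h
    exact hφinj this
  set e : {x : Fin 2 → ℤ // x ≠ 0} → {w : ℂ // w ∈ lattice ω₁ ω₂ ∧ w ≠ 0} :=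
    fun x => ⟨φ x.1, hmem x⟩ with hedef
  have hebij : Function.Bijective e := by
    constructor
    · intro a b hab
      exact Subtype.ext (hφinj (congrArg Subtype.val hab))
    · rintro ⟨w, ⟨m, n, hw⟩, hw0⟩
      refine ⟨⟨![m, n], fun h => hw0 ?_⟩, ?_⟩
      · have : φ ![m, n] = w := by simp [hφdef, hw]
        rw [hw]
        have h0 : (![m, n] : Fin 2 → ℤ) 0 = 0 := by rw [h]; rfl
        have h1 : (![m, n] : Fin 2 → ℤ) 1 = 0 := by rw [h]; rfl
        simp only [Matrix.cons_val_zero, Matrix.cons_val_one, Matrix.head_cons] at h0 h1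
        simp [h0, h1]
      · exact Subtype.ext (by simp [hedef, hφdef, hw])
  set E := Equiv.ofBijective e hebij with hEdef
  rw [← Equiv.summable_iff E]
  -- the comparison
  have hident : ∀ w : ℂ, w ≠ 0 → w ≠ z → 1 / (z - w) + 1 / w + z / w ^ 2
      = -(z ^ 2) / ((w - z) * w ^ 2) := by
    intro w hw0 hwz
    have hwz' : w - z ≠ 0 := sub_ne_zero.mpr hwz
    have hzw' : z - w ≠ 0 := sub_ne_zero.mpr (Ne.symm hwz)
    field_simp
    ring
  have hz0 : z ≠ 0 := fun h => hz (h ▸ ⟨0, 0, by simp⟩)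
  set C : ℝ := 2 * ‖z‖ ^ 2 / c ^ 3 with hCdef
  set R : ℝ := (2 * ‖z‖ + 1) / c with hRdef
  have hsum : Summable (fun x : {x : Fin 2 → ℤ // x ≠ 0} => C * ‖(x : Fin 2 → ℤ)‖ ^ (-(3:ℝ))) := by
    exact ((EisensteinSeries.summable_one_div_norm_rpow (by norm_num : (2:ℝ) < 3)).mul_left C).subtype _
  apply Summable.of_norm_bounded_eventually hsum
  -- eventually in cofinite
  have hcof : ∀ᶠ x : Fin 2 → ℤ in Filter.cofinite, R ≤ ‖x‖ := by
    have : Filter.Tendsto (norm : (Fin 2 → ℤ) → ℝ) Filter.cofinite Filter.atTop := by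
      rw [← Filter.cocompact_eq_cofinite]; exact tendsto_norm_cocompact_atTop
    exact this.eventually_ge_atTop R
  have hcofsub : ∀ᶠ x : {x : Fin 2 → ℤ // x ≠ 0} in Filter.cofinite, R ≤ ‖(x : Fin 2 → ℤ)‖ := by
    rw [Filter.eventually_cofinite] at hcof ⊢
    have : {x : {x : Fin 2 → ℤ // x ≠ 0} | ¬ R ≤ ‖(x : Fin 2 → ℤ)‖}
        = Subtype.val ⁻¹' {x : Fin 2 → ℤ | ¬ R ≤ ‖x‖} := rfl
    rw [this]
    exact hcof.preimage (Subtype.val_injective.injOn)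
  filter_upwards [hcofsub] with x hx
  -- now the pointwise bound
  set w : ℂ := φ x.1 with hwdef
  have hxnorm : (1:ℝ) ≤ ‖x.1‖ := by
    obtain ⟨i, hi⟩ := Function.ne_iff.mp x.2
    calc (1:ℝ) ≤ ‖x.1 i‖ := by
          rw [Int.norm_eq_abs]; exact_mod_cast Int.one_le_abs hi
      _ ≤ ‖x.1‖ := norm_le_pi_norm x.1 i
  have hcx : c * ‖x.1‖ ≤ ‖w‖ := hlb x.1
  have hwlarge : 2 * ‖z‖ + 1 ≤ ‖w‖ := by
    have : (2 * ‖z‖ + 1) ≤ c * ‖x.1‖ := by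
      rw [hRdef, div_le_iff₀ hc0] at hx
      linarith [mul_comm c ‖(x : Fin 2 → ℤ)‖]
    linarith
  have hw0 : w ≠ 0 := (hmem x).2
  have hwz : w ≠ z := fun h => hz (h ▸ (hmem x).1)
  have hwznorm : ‖w‖ / 2 ≤ ‖w - z‖ := by
    have h1 : ‖w‖ - ‖z‖ ≤ ‖w - z‖ := norm_sub_norm_le w z
    linarith
  have hnormval : ‖1 / (z - w) + 1 / w + z / w ^ 2‖ = ‖z‖ ^ 2 / (‖w - z‖ * ‖w‖ ^ 2) := by
    rw [hident w hw0 hwz, norm_div, norm_neg, norm_pow, norm_mul, norm_pow]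
  have hxpos : 0 < ‖x.1‖ := lt_of_lt_of_le one_pos hxnorm
  have hwpos : 0 < ‖w‖ := norm_pos_iff.mpr hw0
  have hrpow : (‖x.1‖ : ℝ) ^ (-(3:ℝ)) = (‖x.1‖ ^ 3)⁻¹ := by
    rw [Real.rpow_neg (norm_nonneg _), ← Real.rpow_natCast ‖x.1‖ 3]
    norm_num
  have hbound : ‖z‖ ^ 2 / (‖w - z‖ * ‖w‖ ^ 2) ≤ C * ‖x.1‖ ^ (-(3:ℝ)) := by
    have hcx3 : (c * ‖x.1‖) ^ 3 ≤ ‖w‖ ^ 3 :=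
      pow_le_pow_left₀ (by positivity) hcx 3
    have hden : (c * ‖x.1‖) ^ 3 / 2 ≤ ‖w - z‖ * ‖w‖ ^ 2 := by
      nlinarith [norm_nonneg w, norm_nonneg (w - z)]
    have h1 : ‖z‖ ^ 2 / (‖w - z‖ * ‖w‖ ^ 2) ≤ ‖z‖ ^ 2 / ((c * ‖x.1‖) ^ 3 / 2) :=
      div_le_div_of_nonneg_left (by positivity)
        (div_pos (pow_pos (mul_pos hc0 hxpos) 3) two_pos) hden
    have h2 : ‖z‖ ^ 2 / ((c * ‖x.1‖) ^ 3 / 2) = C * ‖x.1‖ ^ (-(3:ℝ)) := by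
      rw [hrpow, hCdef]
      field_simp
    linarith
  calc ‖‖1 / (z - (E x : ℂ)) + 1 / (E x : ℂ) + z / (E x : ℂ) ^ 2‖‖
      = ‖1 / (z - w) + 1 / w + z / w ^ 2‖ := by
        rw [Real.norm_of_nonneg (norm_nonneg _)]; rfl
    _ = ‖z‖ ^ 2 / (‖w - z‖ * ‖w‖ ^ 2) := hnormval
    _ ≤ C * ‖x.1‖ ^ (-(3:ℝ)) := hbound
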